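/- For every natural number n ≥ 1, it is not the case that G_{n+1} ≤ G_{n−1}. -/

import Mathlib

universe u

/-- Normal-play pre-games (removed from Mathlib; old Mathlib definition restated). -/
inductive SetTheory.PGame : Type (u + 1)
  | mk : ∀ α β : Type u, (α → SetTheory.PGame) → (β → SetTheory.PGame) → SetTheory.PGame

/-- The pre-game `0 = { | }`, as in old Mathlib. -/
instance SetTheory.PGame.instZero : Zero SetTheory.PGame :=
  ⟨SetTheory.PGame.mk PEmpty PEmpty PEmpty.elim PEmpty.elim⟩

/-- Combinatorial games over a poset `A` of atoms: either an atomic game `[a]` for an atom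
`a : A`, or a composite game `⟨L|R⟩` where `L` and `R` are nonempty families of games
(the left and right options). -/
inductive PoGame (A : Type u) : Type (u + 1) where
  | atom : A → PoGame A
  | mk : (xl xr : Type u) → (xl → PoGame A) → (xr → PoGame A) →
      Nonempty xl → Nonempty xr → PoGame A

namespace PoGame

variable {A : Type u}

/-- `G` is an atomic game. -/
def IsAtomic : PoGame A → Prop
  | atom _ => True
  | mk _ _ _ _ _ _ => False

/-- `G` is a left option of the game given as second argument. -/
def IsLeftOption (G : PoGame A) : PoGame A → Prop
  | atom _ => False
  | mk _ _ L _ _ _ => ∃ i, L i = G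

/-- `G` is a right option of the game given as second argument. -/
def IsRightOption (G : PoGame A) : PoGame A → Prop
  | atom _ => False
  | mk _ _ _ R _ _ => ∃ j, R j = G

section Order

variable [PartialOrder A]

mutual
  /-- `Le G H` is the relation `G ≤ H` on games over the poset `A`, defined by mutual
  recursion with `Lf` (the relation `G ⊲ H`): `G ≤ H` iff every left option `G^L`
  satisfies `G^L ⊲ H`, every right option `H^R` satisfies `G ⊲ H^R`, and if `G` or `H`
  is atomic then `G ⊲ H`. -/
  inductive Le : PoGame A → PoGame A → Prop
    | intro (G H : PoGame A)
        (hL : ∀ G', IsLeftOption G' G → Lf G' H)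
        (hR : ∀ H', IsRightOption H' H → Lf G H')
        (hA : IsAtomic G ∨ IsAtomic H → Lf G H) : Le G H

  /-- `Lf G H` is the relation `G ⊲ H` on games over the poset `A`: it holds iff some
  right option `G^R` satisfies `G^R ≤ H`, or some left option `H^L` satisfies `G ≤ H^L`,
  or `G = [a]` and `H = [b]` are atomic with `a ≤ b` in `A`. -/
  inductive Lf : PoGame A → PoGame A → Prop
    | rightOption (G H G' : PoGame A) (h : IsRightOption G' G) (hle : Le G' H) : Lf G H
    | leftOption (G H H' : PoGame A) (h : IsLeftOption H' H) (hle : Le G H') : Lf G H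
    | atom (a b : A) (hab : a ≤ b) : Lf (atom a) (atom b)
end

/-- Two games are equivalent if `G ≤ H` and `H ≤ G`. -/
def GEquiv (G H : PoGame A) : Prop := Le G H ∧ Le H G

/-- `G` is locally monotone if `G ≤ G^L` for every left option `G^L` and `G^R ≤ G` for
every right option `G^R`. -/
def LocallyMonotone (G : PoGame A) : Prop :=
  (∀ G', IsLeftOption G' G → Le G G') ∧ (∀ G', IsRightOption G' G → Le G' G)

/-- `G` is an option (left or right) of `H`. -/
def IsOption (G H : PoGame A) : Prop := IsLeftOption G H ∨ IsRightOption G H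

/-- `G` is a position of `H`: `H` itself, an option of `H`, an option of an option, etc. -/
def IsPosition (G H : PoGame A) : Prop := Relation.ReflTransGen IsOption G H

/-- `G` is monotone if every position of `G` is locally monotone. -/
def Monotone (G : PoGame A) : Prop := ∀ K, IsPosition K G → LocallyMonotone K

end Order

/-- The 5-element linearly ordered set `L5 = {-3, -2, -1, 0, 1}`. -/
abbrev L5 : Type := {a : ℤ // -3 ≤ a ∧ a ≤ 1}

/-- `G` has mean `C`: an atomic game `[a]` has mean `a`, and a composite game has mean `C`
iff every left option has mean `C + 1` and every right option has mean `C - 1`. -/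
def HasMean : PoGame L5 → ℤ → Prop
  | atom a, C => (a : ℤ) = C
  | mk _ _ L R _ _, C => (∀ i, HasMean (L i) (C + 1)) ∧ (∀ j, HasMean (R j) (C - 1))

/-- The game `⟨G | H⟩` with a single left option `G` and a single right option `H`. -/
def ofPair (G H : PoGame A) : PoGame A :=
  mk PUnit PUnit (fun _ => G) (fun _ => H) ⟨PUnit.unit⟩ ⟨PUnit.unit⟩

/-- `⋆ = ⟨-1 | -3⟩`. -/
def star : PoGame L5 := ofPair (atom ⟨-1, by norm_num⟩) (atom ⟨-3, by norm_num⟩)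

/-- `M(G) = ⟨1 | G⟩`. -/
def M (G : PoGame L5) : PoGame L5 := ofPair (atom ⟨1, by norm_num⟩) G

/-- `P(G) = ⟨G | -2⟩`. -/
def P (G : PoGame L5) : PoGame L5 := ofPair G (atom ⟨-2, by norm_num⟩)

/-- `P⋆(G) = ⟨G | ⋆⟩`. -/
def Pstar (G : PoGame L5) : PoGame L5 := ofPair G star

/-- `Pn n G = P G` if `n` is odd, `P⋆ G` if `n` is even. -/
def Pn (n : ℕ) (G : PoGame L5) : PoGame L5 := if Odd n then P G else Pstar G

/-- The sequence `G_0 = [0]`, `G_{n+1} = M (Pn n (G_n))`. -/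
def Gseq : ℕ → PoGame L5
  | 0 => atom ⟨0, by norm_num⟩
  | n + 1 => M (Pn n (Gseq n))

/-- The normal-play game obtained from a game over `L5` by replacing every atom by the
normal-play game `0 = { | }`, keeping the tree of left and right options. -/
def np : PoGame L5 → SetTheory.PGame.{0}
  | atom _ => 0
  | mk xl xr L R _ _ => SetTheory.PGame.mk xl xr (fun i => np (L i)) (fun j => np (R j))

end PoGame

open PoGame

namespace Stmt11Aux

def m3 : L5 := ⟨-3, by norm_num⟩
def m2 : L5 := ⟨-2, by norm_num⟩
def m1 : L5 := ⟨-1, by norm_num⟩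
def z0 : L5 := ⟨0, by norm_num⟩
def p1 : L5 := ⟨1, by norm_num⟩

lemma le_elim {G H : PoGame L5} (h : Le G H) :
    (∀ G', IsLeftOption G' G → Lf G' H) ∧ (∀ H', IsRightOption H' H → Lf G H') := by
  cases h with
  | intro G H hL hR hA => exact ⟨hL, hR⟩

lemma lf_elim {G H : PoGame L5} (h : Lf G H) :
    (∃ G', IsRightOption G' G ∧ Le G' H) ∨ (∃ H', IsLeftOption H' H ∧ Le G H') ∨
      (∃ a b : L5, G = PoGame.atom a ∧ H = PoGame.atom b ∧ a ≤ b) := by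
  cases h with
  | rightOption G H G' h hle => exact Or.inl ⟨G', h, hle⟩
  | leftOption G H H' h hle => exact Or.inr (Or.inl ⟨H', h, hle⟩)
  | atom a b hab => exact Or.inr (Or.inr ⟨a, b, rfl, rfl, hab⟩)

lemma isLeft_ofPair (X Y : PoGame L5) : IsLeftOption X (ofPair X Y) := ⟨PUnit.unit, rfl⟩
lemma isRight_ofPair (X Y : PoGame L5) : IsRightOption Y (ofPair X Y) := ⟨PUnit.unit, rfl⟩

lemma eq_of_isLeft_ofPair {G' X Y : PoGame L5} (h : IsLeftOption G' (ofPair X Y)) : G' = X := by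
  obtain ⟨_, h⟩ := h; exact h.symm

lemma eq_of_isRight_ofPair {G' X Y : PoGame L5} (h : IsRightOption G' (ofPair X Y)) : G' = Y := by
  obtain ⟨_, h⟩ := h; exact h.symm

lemma not_lf_atom {a b : L5} (hab : ¬ a ≤ b) : ¬ Lf (PoGame.atom a) (PoGame.atom b) := by
  intro h
  rcases lf_elim h with ⟨G', hG', _⟩ | ⟨H', hH', _⟩ | ⟨x, y, hx, hy, hxy⟩
  · exact hG'
  · exact hH'
  · injection hx with h1; injection hy with h2; subst h1; subst h2; exact hab hxy

lemma not_le_star_m2 : ¬ Le star (PoGame.atom m2) := by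
  intro h
  have hlf := (le_elim h).1 (PoGame.atom m1) (isLeft_ofPair _ _)
  exact not_lf_atom (show ¬ m1 ≤ m2 by norm_num [m1, m2, Subtype.mk_le_mk]) hlf

lemma not_le_m2_star : ¬ Le (PoGame.atom m2) star := by
  intro h
  have hlf := (le_elim h).2 (PoGame.atom m3) (isRight_ofPair _ _)
  exact not_lf_atom (show ¬ m2 ≤ m3 by norm_num [m2, m3, Subtype.mk_le_mk]) hlf

lemma Gseq_succ (k : ℕ) : Gseq (k + 1) = ofPair (PoGame.atom p1) (Pn k (Gseq k)) := rfl

lemma Pn_odd {n : ℕ} (h : n % 2 = 1) (G : PoGame L5) :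
    Pn n G = ofPair G (PoGame.atom m2) := by
  have ho : Odd n := Nat.odd_iff.mpr h
  simp only [Pn, if_pos ho]; rfl

lemma Pn_even {n : ℕ} (h : n % 2 = 0) (G : PoGame L5) :
    Pn n G = ofPair G star := by
  have ho : ¬ Odd n := by simp [Nat.odd_iff, h]
  simp only [Pn, if_neg ho]; rfl

lemma isLeft_Pn (n : ℕ) (G : PoGame L5) : IsLeftOption G (Pn n G) := by
  unfold Pn; split
  · exact isLeft_ofPair _ _
  · exact isLeft_ofPair _ _

lemma eq_of_isLeft_Pn {H' : PoGame L5} {n : ℕ} {G : PoGame L5}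
    (h : IsLeftOption H' (Pn n G)) : H' = G := by
  unfold Pn at h; split at h
  · exact eq_of_isLeft_ofPair h
  · exact eq_of_isLeft_ofPair h

lemma Pn_ne_atom {n : ℕ} {G : PoGame L5} {x : L5} : Pn n G ≠ PoGame.atom x := by
  unfold Pn; split <;> simp [P, Pstar, ofPair]

lemma not_le_B_m1 : ∀ k : ℕ, ¬ Le (Pn k (Gseq k)) (PoGame.atom m1) := by
  intro k
  induction k with
  | zero =>
    intro h
    have hlf := (le_elim h).1 (Gseq 0) (isLeft_Pn 0 _)
    exact not_lf_atom (show ¬ z0 ≤ m1 by norm_num [z0, m1, Subtype.mk_le_mk]) hlf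
  | succ k ih =>
    intro h
    have hlf := (le_elim h).1 (Gseq (k + 1)) (isLeft_Pn _ _)
    rcases lf_elim hlf with ⟨G', hG', hle⟩ | ⟨H', hH', _⟩ | ⟨x, y, hx, _, _⟩
    · rw [Gseq_succ] at hG'
      obtain rfl := eq_of_isRight_ofPair hG'
      exact ih hle
    · exact hH'
    · rw [Gseq_succ] at hx; simp [ofPair] at hx

lemma not_le_B_eo {a b : ℕ} (ha : a % 2 = 0) (hb : b % 2 = 1) :
    ¬ Le (Pn a (Gseq a)) (Pn b (Gseq b)) := by
  intro h
  rw [Pn_even ha, Pn_odd hb] at h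
  have hlf := (le_elim h).2 (PoGame.atom m2) (isRight_ofPair _ _)
  rcases lf_elim hlf with ⟨G', hG', hle⟩ | ⟨H', hH', _⟩ | ⟨x, y, hx, hy, hxy⟩
  · obtain rfl := eq_of_isRight_ofPair hG'
    exact not_le_star_m2 hle
  · exact hH'
  · simp [ofPair] at hx

lemma not_le_B_oe {a b : ℕ} (ha : a % 2 = 1) (hb : b % 2 = 0) :
    ¬ Le (Pn a (Gseq a)) (Pn b (Gseq b)) := by
  intro h
  rw [Pn_odd ha, Pn_even hb] at h
  have hlf := (le_elim h).2 star (isRight_ofPair _ _)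
  rcases lf_elim hlf with ⟨G', hG', hle⟩ | ⟨H', hH', hle⟩ | ⟨x, y, hx, hy, hxy⟩
  · obtain rfl := eq_of_isRight_ofPair hG'
    exact not_le_m2_star hle
  · have hH'' : H' = PoGame.atom m1 := eq_of_isLeft_ofPair hH'
    rw [hH''] at hle
    rw [← Pn_odd ha] at hle
    exact not_le_B_m1 a hle
  · simp [ofPair] at hx

lemma not_le_B_cross {a b : ℕ} (h : a % 2 ≠ b % 2) :
    ¬ Le (Pn a (Gseq a)) (Pn b (Gseq b)) := by
  rcases Nat.mod_two_eq_zero_or_one a with h0 | h1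
  · exact not_le_B_eo h0 (by omega)
  · exact not_le_B_oe h1 (by omega)

lemma not_le_G_zero {a : ℕ} (ha : 1 ≤ a) : ¬ Le (Gseq a) (Gseq 0) := by
  obtain ⟨k, rfl⟩ : ∃ k, a = k + 1 := ⟨a - 1, by omega⟩
  intro h
  have hlf := (le_elim h).1 (PoGame.atom p1)
    (by rw [Gseq_succ]; exact isLeft_ofPair _ _)
  exact not_lf_atom (show ¬ p1 ≤ z0 by norm_num [p1, z0, Subtype.mk_le_mk]) hlf

lemma main : ∀ b a : ℕ, b < a →
    ((a % 2 = b % 2 → ¬ Le (Gseq a) (Gseq b) ∧ ¬ Le (Pn a (Gseq a)) (Pn b (Gseq b))) ∧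
     (a % 2 ≠ b % 2 → ¬ Le (Gseq a) (Gseq b))) := by
  intro b
  induction b using Nat.strong_induction_on with
  | _ b ih =>
    intro a hba
    obtain ⟨k, rfl⟩ : ∃ k, a = k + 1 := ⟨a - 1, by omega⟩
    constructor
    · intro hpar
      have hG : ¬ Le (Gseq (k + 1)) (Gseq b) := by
        match b, hpar, hba with
        | 0, _, hba => exact not_le_G_zero (by omega)
        | c + 1, hpar, hba =>
          intro h
          have hlf := (le_elim h).2 (Pn c (Gseq c))
            (by rw [Gseq_succ]; exact isRight_ofPair _ _)
          rcases lf_elim hlf with ⟨G', hG', hle⟩ | ⟨H', hH', hle⟩ | ⟨x, y, hx, _, _⟩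
          · rw [Gseq_succ] at hG'
            obtain rfl := eq_of_isRight_ofPair hG'
            exact ((ih c (by omega) k (by omega)).1 (by omega)).2 hle
          · obtain rfl := eq_of_isLeft_Pn hH'
            exact (ih c (by omega) (k + 1) (by omega)).2 (by omega) hle
          · rw [Gseq_succ] at hx; simp [ofPair] at hx
      refine ⟨hG, ?_⟩
      intro h
      have hlf := (le_elim h).1 (Gseq (k + 1)) (isLeft_Pn _ _)
      rcases lf_elim hlf with ⟨G', hG', hle⟩ | ⟨H', hH', hle⟩ | ⟨x, y, hx, _, _⟩
      · rw [Gseq_succ] at hG'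
        obtain rfl := eq_of_isRight_ofPair hG'
        exact not_le_B_cross (by omega) hle
      · obtain rfl := eq_of_isLeft_Pn hH'
        exact hG hle
      · rw [Gseq_succ] at hx; simp [ofPair] at hx
    · intro hpar
      match b, hpar, hba with
      | 0, _, hba => exact not_le_G_zero (by omega)
      | d + 1, hpar, hba =>
        intro h
        have hlf := (le_elim h).2 (Pn d (Gseq d))
          (by rw [Gseq_succ]; exact isRight_ofPair _ _)
        rcases lf_elim hlf with ⟨G', hG', hle⟩ | ⟨H', hH', hle⟩ | ⟨x, y, hx, _, _⟩
        · rw [Gseq_succ] at hG'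
          obtain rfl := eq_of_isRight_ofPair hG'
          exact not_le_B_cross (by omega) hle
        · obtain rfl := eq_of_isLeft_Pn hH'
          exact ((ih d (by omega) (k + 1) (by omega)).1 (by omega)).1 hle
        · rw [Gseq_succ] at hx; simp [ofPair] at hx

end Stmt11Aux

open PoGame in
/-- For every natural number `n ≥ 1`, it is not the case that `G_{n+1} ≤ G_{n-1}`. -/
theorem stmt_11 (n : ℕ) (hn : 1 ≤ n) : ¬ Le (Gseq (n + 1)) (Gseq (n - 1)) := by
  exact ((Stmt11Aux.main (n - 1) (n + 1) (by omega)).1 (by omega)).1
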